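/- Let n be a nonzero integer. Then there is no nonzero rational function r ∈ ℂ(z) satisfying r(z²) = (1 − z)^{−n}·r(z). -/
import Mathlib


open Polynomial

lemma rm_pow (a : ℂ) (p : ℂ[X]) (hp : p ≠ 0) (m : ℕ) :
    rootMultiplicity a (p ^ m) = m * rootMultiplicity a p := by
  induction m with
  | zero => simp [rootMultiplicity_C]
  | succ k ih =>
      rw [pow_succ, rootMultiplicity_mul (mul_ne_zero (pow_ne_zero _ hp) hp), ih]
      ring

lemma rm_one_sub_X : rootMultiplicity (1:ℂ) (1 - X) = 1 := by
  have h : (1 - X : ℂ[X]) = C (-1) * (X - C 1) := by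
    rw [map_neg, map_one]; ring
  have h0 : (C (-1) * (X - C 1) : ℂ[X]) ≠ 0 :=
    mul_ne_zero (by simp) (X_sub_C_ne_zero 1)
  rw [h, rootMultiplicity_mul h0, rootMultiplicity_C, rootMultiplicity_X_sub_C_self]

lemma comp_sq_ne_zero {p : ℂ[X]} (hp : p ≠ 0) : p.comp (X ^ 2) ≠ 0 := by
  rw [Ne, comp_eq_zero_iff]
  push_neg
  refine ⟨hp, fun _ h => ?_⟩
  have := congrArg natDegree h
  simp [natDegree_X_pow] at this

lemma rm_comp_sq (p : ℂ[X]) (hp : p ≠ 0) :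
    rootMultiplicity (1:ℂ) (p.comp (X ^ 2)) = rootMultiplicity (1:ℂ) p := by
  obtain ⟨u, hpu, hu⟩ := p.exists_eq_pow_rootMultiplicity_mul_and_not_dvd hp 1
  set k := rootMultiplicity (1:ℂ) p with hk
  have hu1 : u.eval 1 ≠ 0 := fun h => hu (dvd_iff_isRoot.mpr h)
  have hcomp : p.comp (X ^ 2) = (X - C 1) ^ k * ((X + C 1) ^ k * u.comp (X ^ 2)) := by
    have hfac : (X ^ 2 - C 1 : ℂ[X]) = (X - C 1) * (X + C 1) := by rw [map_one]; ring
    rw [hpu]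
    simp only [mul_comp, pow_comp, sub_comp, X_comp, C_comp, hfac, mul_pow]
    ring
  have huc : (u.comp (X ^ 2)).eval 1 ≠ 0 := by
    rw [eval_comp]; simpa using hu1
  have h2 : ((X + C 1 : ℂ[X]) ^ k * u.comp (X ^ 2)).eval 1 ≠ 0 := by
    simp only [eval_mul, eval_pow, eval_add, eval_X, eval_C]
    exact mul_ne_zero (pow_ne_zero _ (by norm_num)) huc
  have h2' : ((X + C 1 : ℂ[X]) ^ k * u.comp (X ^ 2)) ≠ 0 := fun h0 => h2 (by rw [h0]; simp)
  rw [hcomp, rootMultiplicity_mul (mul_ne_zero (pow_ne_zero _ (X_sub_C_ne_zero 1)) h2'),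
    rm_pow _ _ (X_sub_C_ne_zero 1), rootMultiplicity_X_sub_C_self,
    rootMultiplicity_eq_zero (by simpa [IsRoot] using h2)]
  ring

lemma key (p q : ℂ[X]) (hp : p ≠ 0) (hq : q ≠ 0) (a b : ℕ)
    (h : p.comp (X ^ 2) * q * (1 - X) ^ a = p * q.comp (X ^ 2) * (1 - X) ^ b) :
    a = b := by
  have h1X : (1 - X : ℂ[X]) ≠ 0 := fun h => by simpa using congrArg (eval 0) h
  have hP := comp_sq_ne_zero hp
  have hQ := comp_sq_ne_zero hq
  have := congrArg (rootMultiplicity (1:ℂ)) h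
  rw [rootMultiplicity_mul (mul_ne_zero (mul_ne_zero hP hq) (pow_ne_zero _ h1X)),
    rootMultiplicity_mul (mul_ne_zero hP hq),
    rootMultiplicity_mul (mul_ne_zero (mul_ne_zero hp hQ) (pow_ne_zero _ h1X)),
    rootMultiplicity_mul (mul_ne_zero hp hQ),
    rm_pow _ _ h1X, rm_pow _ _ h1X, rm_one_sub_X, rm_comp_sq p hp, rm_comp_sq q hq] at this
  omega

lemma eval₂_sq (p : ℂ[X]) :
    Polynomial.eval₂ RatFunc.C (RatFunc.X ^ 2) p
      = algebraMap ℂ[X] (RatFunc ℂ) (p.comp (X ^ 2)) := by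
  rw [Polynomial.comp, Polynomial.hom_eval₂]
  congr 1
  all_goals first
    | exact RingHom.ext fun a => (RatFunc.algebraMap_C a).symm
    | rw [map_pow, RatFunc.algebraMap_X]


/-- For a nonzero integer `n`, no nonzero rational function `r ∈ ℂ(z)` satisfies
`r(z²) = (1 − z)^(−n)·r(z)`. Here `r(z²)` is expressed as the evaluation of `r`
at `X²` in `ℂ(X)` (note that the denominator of `r` never evaluates to `0` at
`X²`, so this evaluation is the honest substitution). -/
theorem no_ratFunc_solution_homog_two
    (n : ℤ) (hn : n ≠ 0) :
    ¬ ∃ r : RatFunc ℂ, r ≠ 0 ∧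
        RatFunc.eval RatFunc.C (RatFunc.X ^ 2) r =
          (1 - RatFunc.X) ^ (-n) * r := by
  rintro ⟨r, hr0, h⟩
  have hp : r.num ≠ 0 := RatFunc.num_ne_zero hr0
  have hq : r.denom ≠ 0 := r.denom_ne_zero
  have hinj := IsFractionRing.injective ℂ[X] (RatFunc ℂ)
  have hAne : ∀ u : ℂ[X], u ≠ 0 → algebraMap ℂ[X] (RatFunc ℂ) u ≠ 0 := fun u hu =>
    (map_ne_zero_iff _ hinj).mpr hu
  have h1X : (1 - X : ℂ[X]) ≠ 0 := fun h => by simpa using congrArg (eval 0) h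
  have h1r : (1 - RatFunc.X : RatFunc ℂ) = algebraMap ℂ[X] (RatFunc ℂ) (1 - X) := by
    rw [map_sub, map_one, RatFunc.algebraMap_X]
  have h1rne : (1 - RatFunc.X : RatFunc ℂ) ≠ 0 := h1r ▸ hAne _ h1X
  have hQ := hAne _ (comp_sq_ne_zero hq)
  have hq' := hAne _ hq
  rw [RatFunc.eval, eval₂_sq, eval₂_sq] at h
  conv_rhs at h => rw [← r.num_div_denom]
  rcases lt_or_gt_of_ne hn with hneg | hpos
  · set m := (-n).toNat with hm
    have hmn : -n = (m : ℤ) := (Int.toNat_of_nonneg (by omega)).symm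
    have hm0 : 0 < m := by omega
    rw [hmn, zpow_natCast, ← mul_div_assoc, div_eq_div_iff hQ hq'] at h
    have hE : r.num.comp (X ^ 2) * r.denom * (1 - X) ^ 0
        = r.num * r.denom.comp (X ^ 2) * (1 - X) ^ m := by
      apply hinj
      simp only [map_mul, map_pow, map_sub, map_one, RatFunc.algebraMap_X, pow_zero, mul_one]
      linear_combination h
    have := key _ _ hp hq 0 m hE
    omega
  · set m := n.toNat with hm
    have hmn : n = (m : ℤ) := (Int.toNat_of_nonneg hpos.le).symm
    have hm0 : 0 < m := by omega
    rw [hmn, zpow_neg, zpow_natCast, inv_mul_eq_div, div_div,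
      div_eq_div_iff hQ (mul_ne_zero hq' (pow_ne_zero _ h1rne))] at h
    have hE : r.num.comp (X ^ 2) * r.denom * (1 - X) ^ m
        = r.num * r.denom.comp (X ^ 2) * (1 - X) ^ 0 := by
      apply hinj
      simp only [map_mul, map_pow, map_sub, map_one, RatFunc.algebraMap_X, pow_zero, mul_one]
      linear_combination h
    have := key _ _ hp hq m 0 hE
    omega
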